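/- (Auslander) Let X be a separable, locally compact, metrizable topological space and let D ⊆ X × X be a closed quasi-order on X. Then for all x, y ∈ X: (x,y) ∈ D if and only if L(x) ≥ L(y) for every continuous function L : X → ℝ satisfying L(a) ≥ L(b) for all (a,b) ∈ D. In other words, D is completely determined by its set of Lyapunov functions: D = D_{L_D}. -/

import Mathlib

open Set Filter Topology

namespace Aus

variable {X : Type*}

/-- `S` is a down-set for relation `D`. -/
def IsDown (D : Set (X × X)) (S : Set X) : Prop := ∀ ⦃a b : X⦄, (a, b) ∈ D → a ∈ S → b ∈ S

/-- `S` is an up-set for relation `D`. -/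
def IsUp (D : Set (X × X)) (S : Set X) : Prop := ∀ ⦃a b : X⦄, (a, b) ∈ D → b ∈ S → a ∈ S

/-- Down closure. -/
def dcl (D : Set (X × X)) (A : Set X) : Set X := {b | ∃ a ∈ A, (a, b) ∈ D}

/-- Up closure. -/
def ucl (D : Set (X × X)) (A : Set X) : Set X := {a | ∃ b ∈ A, (a, b) ∈ D}

section Closed

variable [MetricSpace X] {D : Set (X × X)}

theorem isClosed_dcl (hD : IsClosed D) {K : Set X} (hK : IsCompact K) :
    IsClosed (dcl D K) := by
  refine IsSeqClosed.isClosed ?_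
  intro u b hu hub
  choose a ha haD using hu
  obtain ⟨c, hcK, φ, hφ, hφa⟩ := hK.tendsto_subseq ha
  refine ⟨c, hcK, ?_⟩
  have h1 : Tendsto (fun n => (a (φ n), u (φ n))) atTop (𝓝 (c, b)) :=
    hφa.prodMk_nhds (hub.comp hφ.tendsto_atTop)
  exact hD.mem_of_tendsto h1 (Eventually.of_forall fun n => haD (φ n))

theorem isClosed_ucl (hD : IsClosed D) {K : Set X} (hK : IsCompact K) :
    IsClosed (ucl D K) := by
  refine IsSeqClosed.isClosed ?_
  intro u b hu hub
  choose a ha haD using hu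
  obtain ⟨c, hcK, φ, hφ, hφa⟩ := hK.tendsto_subseq ha
  refine ⟨c, hcK, ?_⟩
  have h1 : Tendsto (fun n => (u (φ n), a (φ n))) atTop (𝓝 (b, c)) :=
    (hub.comp hφ.tendsto_atTop).prodMk_nhds hφa
  exact hD.mem_of_tendsto h1 (Eventually.of_forall fun n => haD (φ n))

/-- The invariant maintained along the compact exhaustion. -/
def Good (D : Set (X × X)) (F G : Set X) (p : Set X × Set X) : Prop :=
  IsOpen p.1 ∧ IsOpen p.2 ∧ IsCompact (closure p.1) ∧ IsCompact (closure p.2) ∧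
  (∀ z ∈ closure p.1, z ∉ G) ∧ (∀ z ∈ closure p.2, z ∉ F) ∧
  (∀ a ∈ closure p.1, ∀ b ∈ closure p.2, (a, b) ∉ D)

variable [LocallyCompactSpace X]

theorem good_step
    (hrefl : ∀ x : X, (x, x) ∈ D)
    (htrans : ∀ x y z : X, (x, y) ∈ D → (y, z) ∈ D → (x, z) ∈ D)
    (hclosed : IsClosed D)
    {F G : Set X} (hF : IsClosed F) (hFd : IsDown D F)
    (hG : IsClosed G) (hGu : IsUp D G) (hFG : ∀ z, z ∈ F → z ∉ G)
    {C : Set X} (hC : IsCompact C)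
    {p : Set X × Set X} (hp : Good D F G p) :
    ∃ q : Set X × Set X, Good D F G q ∧
      closure p.1 ∪ (dcl D (closure p.1) ∩ C) ∪ (F ∩ C) ⊆ q.1 ∧
      closure p.2 ∪ (ucl D (closure p.2) ∩ C) ∪ (G ∩ C) ⊆ q.2 := by
  obtain ⟨hU, hV, hcU, hcV, hUG, hVF, hUV⟩ := hp
  set A : Set X := closure p.1 ∪ (dcl D (closure p.1) ∩ C) ∪ (F ∩ C) with hA
  set B : Set X := closure p.2 ∪ (ucl D (closure p.2) ∩ C) ∪ (G ∩ C) with hB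
  have hAc : IsCompact A := by
    refine (hcU.union ?_).union ?_
    · exact hC.inter_left (isClosed_dcl hclosed hcU)
    · exact hC.inter_left hF
  have hBc : IsCompact B := by
    refine (hcV.union ?_).union ?_
    · exact hC.inter_left (isClosed_ucl hclosed hcV)
    · exact hC.inter_left hG
  -- membership characterizations
  have hAsub : ∀ a ∈ A, a ∈ F ∨ a ∈ dcl D (closure p.1) := by
    rintro a ((h | ⟨h, -⟩) | ⟨h, -⟩)
    · exact Or.inr ⟨a, h, hrefl a⟩
    · exact Or.inr h
    · exact Or.inl h
  have hBsub : ∀ b ∈ B, b ∈ G ∨ b ∈ ucl D (closure p.2) := by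
    rintro b ((h | ⟨h, -⟩) | ⟨h, -⟩)
    · exact Or.inr ⟨b, h, hrefl b⟩
    · exact Or.inr h
    · exact Or.inl h
  have hAG : ∀ a ∈ A, a ∉ G := by
    intro a ha haG
    rcases hAsub a ha with h | ⟨u, hu, huD⟩
    · exact hFG a h haG
    · exact hUG u hu (hGu huD haG)
  have hBF : ∀ b ∈ B, b ∉ F := by
    intro b hb hbF
    rcases hBsub b hb with h | ⟨v, hv, hvD⟩
    · exact hFG b hbF h
    · exact hVF v hv (hFd hvD hbF)
  have hAB : ∀ a ∈ A, ∀ b ∈ B, (a, b) ∉ D := by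
    intro a ha b hb hab
    rcases hAsub a ha with haF | ⟨u, hu, huD⟩
    · -- a ∈ F, hence b ∈ F
      exact hBF b hb (hFd hab haF)
    · have hub : (u, b) ∈ D := htrans _ _ _ huD hab
      rcases hBsub b hb with hbG | ⟨v, hv, hvD⟩
      · exact hUG u hu (hGu hub hbG)
      · exact hUV u hu v hv (htrans _ _ _ hub hvD)
  -- tube lemma
  obtain ⟨U2, V2, hU2, hV2, hAU2, hBV2, htube⟩ :=
    generalized_tube_lemma hAc hBc hclosed.isOpen_compl
      (fun z hz => by
        rcases (mem_prod.1 hz) with ⟨h1, h2⟩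
        exact hAB _ h1 _ h2)
  -- shrink with compact closures
  obtain ⟨U', hU'o, hAU', hclU', hcU'⟩ :=
    exists_open_between_and_isCompact_closure hAc (hU2.inter hG.isOpen_compl)
      (fun z hz => ⟨hAU2 hz, hAG z hz⟩)
  obtain ⟨V', hV'o, hBV', hclV', hcV'⟩ :=
    exists_open_between_and_isCompact_closure hBc (hV2.inter hF.isOpen_compl)
      (fun z hz => ⟨hBV2 hz, hBF z hz⟩)
  refine ⟨(U', V'), ⟨hU'o, hV'o, hcU', hcV', ?_, ?_, ?_⟩, hAU', hBV'⟩
  · exact fun z hz => (hclU' hz).2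
  · exact fun z hz => (hclV' hz).2
  · intro a ha b hb hab
    exact htube (mem_prod.2 ⟨(hclU' ha).1, (hclV' hb).1⟩) hab


/-- Order normality for σ-compact locally compact metric spaces with closed preorders. -/
theorem order_normal [SigmaCompactSpace X]
    (hrefl : ∀ x : X, (x, x) ∈ D)
    (htrans : ∀ x y z : X, (x, y) ∈ D → (y, z) ∈ D → (x, z) ∈ D)
    (hclosed : IsClosed D)
    {F G : Set X} (hF : IsClosed F) (hFd : IsDown D F)
    (hG : IsClosed G) (hGu : IsUp D G) (hFG : ∀ z, z ∈ F → z ∉ G) :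
    ∃ U V : Set X, IsOpen U ∧ IsOpen V ∧ IsDown D U ∧ IsUp D V ∧
      F ⊆ U ∧ G ⊆ V ∧ ∀ z, z ∈ U → z ∉ V := by
  obtain K := CompactExhaustion.choice X
  have step : ∀ p : Set X × Set X, Good D F G p → ∀ n : ℕ,
      ∃ q : Set X × Set X, Good D F G q ∧
        closure p.1 ∪ (dcl D (closure p.1) ∩ K n) ∪ (F ∩ K n) ⊆ q.1 ∧
        closure p.2 ∪ (ucl D (closure p.2) ∩ K n) ∪ (G ∩ K n) ⊆ q.2 :=
    fun p hp n => good_step hrefl htrans hclosed hF hFd hG hGu hFG (K.isCompact n) hp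
  choose! f hf1 hf2 hf3 using step
  have base : Good D F G ((∅ : Set X), (∅ : Set X)) := by
    refine ⟨isOpen_empty, isOpen_empty, ?_, ?_, ?_, ?_, ?_⟩ <;>
      simp [closure_empty]
  set seq : ℕ → Set X × Set X := fun n => Nat.rec ((∅ : Set X), (∅ : Set X))
    (fun m p => f p (m + 1)) n with hseq
  have hgood : ∀ n, Good D F G (seq n) := by
    intro n
    induction n with
    | zero => exact base
    | succ m ih => exact hf1 _ ih (m + 1)
  have hlink1 : ∀ n, closure (seq n).1 ∪ (dcl D (closure (seq n).1) ∩ K (n + 1)) ∪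
      (F ∩ K (n + 1)) ⊆ (seq (n + 1)).1 := fun n => hf2 _ (hgood n) (n + 1)
  have hlink2 : ∀ n, closure (seq n).2 ∪ (ucl D (closure (seq n).2) ∩ K (n + 1)) ∪
      (G ∩ K (n + 1)) ⊆ (seq (n + 1)).2 := fun n => hf3 _ (hgood n) (n + 1)
  have hmono1 : ∀ m n : ℕ, m ≤ n → (seq m).1 ⊆ (seq n).1 := by
    intro m n hmn
    induction n with
    | zero => simpa [Nat.le_zero.1 hmn] using subset_rfl
    | succ k ih =>
      rcases Nat.lt_or_ge m (k+1) with h | h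
      · exact (ih (Nat.lt_succ_iff.1 h)).trans
          (subset_closure.trans (fun z hz => hlink1 k (Or.inl (Or.inl hz))))
      · have : m = k + 1 := le_antisymm hmn h
        subst this; exact subset_rfl
  have hmono2 : ∀ m n : ℕ, m ≤ n → (seq m).2 ⊆ (seq n).2 := by
    intro m n hmn
    induction n with
    | zero => simpa [Nat.le_zero.1 hmn] using subset_rfl
    | succ k ih =>
      rcases Nat.lt_or_ge m (k+1) with h | h
      · exact (ih (Nat.lt_succ_iff.1 h)).trans
          (subset_closure.trans (fun z hz => hlink2 k (Or.inl (Or.inl hz))))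
      · have : m = k + 1 := le_antisymm hmn h
        subst this; exact subset_rfl
  refine ⟨⋃ n, (seq n).1, ⋃ n, (seq n).2, isOpen_iUnion fun n => (hgood n).1,
    isOpen_iUnion fun n => (hgood n).2.1, ?_, ?_, ?_, ?_, ?_⟩
  · -- down
    rintro a b hab ha
    rcases mem_iUnion.1 ha with ⟨n, han⟩
    rcases K.exists_mem b with ⟨m, hbm⟩
    refine mem_iUnion.2 ⟨max n m + 1, hlink1 (max n m) (Or.inl (Or.inr ?_))⟩
    exact ⟨⟨a, subset_closure (hmono1 n (max n m) (le_max_left _ _) han), hab⟩,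
      K.subset (le_trans (le_max_right _ _) (Nat.le_succ _)) hbm⟩
  · -- up
    rintro a b hab hb
    rcases mem_iUnion.1 hb with ⟨n, hbn⟩
    rcases K.exists_mem a with ⟨m, ham⟩
    refine mem_iUnion.2 ⟨max n m + 1, hlink2 (max n m) (Or.inl (Or.inr ?_))⟩
    exact ⟨⟨b, subset_closure (hmono2 n (max n m) (le_max_left _ _) hbn), hab⟩,
      K.subset (le_trans (le_max_right _ _) (Nat.le_succ _)) ham⟩
  · -- F ⊆ U
    intro z hz
    rcases K.exists_mem z with ⟨m, hm⟩
    exact mem_iUnion.2 ⟨m + 1, hlink1 m (Or.inr ⟨hz, K.subset (Nat.le_succ m) hm⟩)⟩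
  · -- G ⊆ V
    intro z hz
    rcases K.exists_mem z with ⟨m, hm⟩
    exact mem_iUnion.2 ⟨m + 1, hlink2 m (Or.inr ⟨hz, K.subset (Nat.le_succ m) hm⟩)⟩
  · -- disjoint
    intro z hzU hzV
    rcases mem_iUnion.1 hzU with ⟨n, hn⟩
    rcases mem_iUnion.1 hzV with ⟨m, hm⟩
    exact (hgood (max n m)).2.2.2.2.2.2 z
      (subset_closure (hmono1 n _ (le_max_left _ _) hn)) z
      (subset_closure (hmono2 m _ (le_max_right _ _) hm)) (hrefl z)

end Closed

section Insertion
variable [MetricSpace X] [LocallyCompactSpace X] [SigmaCompactSpace X] {D : Set (X × X)}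

theorem insertion
    (hrefl : ∀ x : X, (x, x) ∈ D)
    (htrans : ∀ x y z : X, (x, y) ∈ D → (y, z) ∈ D → (x, z) ∈ D)
    (hclosed : IsClosed D)
    {c u : Set X} (hc : IsClosed c) (hcd : IsDown D c) (hu : IsOpen u) (hud : IsDown D u)
    (hcu : c ⊆ u) :
    ∃ v C', IsOpen v ∧ IsDown D v ∧ IsClosed C' ∧ IsDown D C' ∧ c ⊆ v ∧ v ⊆ C' ∧ C' ⊆ u := by
  have hGu : IsUp D uᶜ := fun a b hab hb ha => hb (hud hab ha)
  obtain ⟨U, V, hUo, hVo, hUd, hVu, hcU, hucV, hdisj⟩ :=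
    order_normal hrefl htrans hclosed hc hcd hu.isClosed_compl hGu
      (fun z hz hz' => hz' (hcu hz))
  refine ⟨U, Vᶜ, hUo, hUd, hVo.isClosed_compl, ?_, hcU, ?_, ?_⟩
  · intro a b hab ha hb
    exact ha (hVu hab hb)
  · exact fun z hz hzV => hdisj z hz hzV
  · exact fun z hz => Classical.byContradiction fun hzu => hz (hucV hzu)

end Insertion

/-- A pair of a closed down-set `C` inside an open down-set `U`, with an insertion property. -/
structure DCU [TopologicalSpace X] (D : Set (X × X)) where
  protected C : Set X
  protected U : Set X
  protected closed_C : IsClosed C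
  protected down_C : IsDown D C
  protected open_U : IsOpen U
  protected down_U : IsDown D U
  protected subset : C ⊆ U
  protected hP : ∀ {c u : Set X}, IsClosed c → IsDown D c → IsOpen u → IsDown D u → c ⊆ u →
    ∃ v C', IsOpen v ∧ IsDown D v ∧ IsClosed C' ∧ IsDown D C' ∧ c ⊆ v ∧ v ⊆ C' ∧ C' ⊆ u

namespace DCU

variable [TopologicalSpace X] {D : Set (X × X)}

private noncomputable def spec (c : DCU D) :=
  c.hP c.closed_C c.down_C c.open_U c.down_U c.subset

noncomputable def left (c : DCU D) : DCU D where
  C := c.C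
  U := c.spec.choose
  closed_C := c.closed_C
  down_C := c.down_C
  open_U := c.spec.choose_spec.choose_spec.1
  down_U := c.spec.choose_spec.choose_spec.2.1
  subset := c.spec.choose_spec.choose_spec.2.2.2.2.1
  hP := c.hP

noncomputable def right (c : DCU D) : DCU D where
  C := c.spec.choose_spec.choose
  U := c.U
  closed_C := c.spec.choose_spec.choose_spec.2.2.1
  down_C := c.spec.choose_spec.choose_spec.2.2.2.1
  open_U := c.open_U
  down_U := c.down_U
  subset := c.spec.choose_spec.choose_spec.2.2.2.2.2.2
  hP := c.hP

@[simp] theorem left_C (c : DCU D) : c.left.C = c.C := rfl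
@[simp] theorem right_U (c : DCU D) : c.right.U = c.U := rfl

theorem left_U_subset_right_C (c : DCU D) : c.left.U ⊆ c.right.C :=
  c.spec.choose_spec.choose_spec.2.2.2.2.2.1

theorem left_U_subset (c : DCU D) : c.left.U ⊆ c.U :=
  Subset.trans c.left_U_subset_right_C c.right.subset

theorem subset_right_C (c : DCU D) : c.C ⊆ c.right.C :=
  Subset.trans c.left.subset c.left_U_subset_right_C

noncomputable def approx : ℕ → DCU D → X → ℝ
  | 0, c, x => indicator c.Uᶜ 1 x
  | n + 1, c, x => midpoint ℝ (approx n c.left x) (approx n c.right x)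

theorem approx_of_mem_C (c : DCU D) (n : ℕ) {x : X} (hx : x ∈ c.C) : c.approx n x = 0 := by
  induction n generalizing c with
  | zero => exact indicator_of_notMem (fun (hU : x ∈ c.Uᶜ) => hU <| c.subset hx) _
  | succ n ihn =>
    simp only [approx]
    rw [ihn, ihn, midpoint_self]
    exacts [c.subset_right_C hx, hx]

theorem approx_of_nmem_U (c : DCU D) (n : ℕ) {x : X} (hx : x ∉ c.U) : c.approx n x = 1 := by
  induction n generalizing c with
  | zero =>
    rw [← mem_compl_iff] at hx
    exact indicator_of_mem hx _
  | succ n ihn =>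
    simp only [approx]
    rw [ihn, ihn, midpoint_self]
    exacts [hx, fun hU => hx <| c.left_U_subset hU]

theorem approx_nonneg (c : DCU D) (n : ℕ) (x : X) : 0 ≤ c.approx n x := by
  induction n generalizing c with
  | zero => exact indicator_nonneg (fun _ _ => zero_le_one) _
  | succ n ihn =>
    simp only [approx, midpoint_eq_smul_add, invOf_eq_inv]
    refine mul_nonneg (inv_nonneg.2 zero_le_two) (add_nonneg ?_ ?_) <;> apply ihn

theorem approx_le_one (c : DCU D) (n : ℕ) (x : X) : c.approx n x ≤ 1 := by
  induction n generalizing c with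
  | zero => exact indicator_apply_le' (fun _ => le_rfl) fun _ => zero_le_one
  | succ n ihn =>
    simp only [approx, midpoint_eq_smul_add, invOf_eq_inv, smul_eq_mul, ← div_eq_inv_mul]
    have := add_le_add (ihn (left c)) (ihn (right c))
    norm_num at this
    exact Iff.mpr (div_le_one zero_lt_two) this

theorem bddAbove_range_approx (c : DCU D) (x : X) : BddAbove (range fun n => c.approx n x) :=
  ⟨1, fun _ ⟨n, hn⟩ => hn ▸ c.approx_le_one n x⟩

theorem approx_le_approx_of_U_sub_C {c₁ c₂ : DCU D} (h : c₁.U ⊆ c₂.C) (n₁ n₂ : ℕ) (x : X) :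
    c₂.approx n₂ x ≤ c₁.approx n₁ x := by
  by_cases hx : x ∈ c₁.U
  · calc
      approx n₂ c₂ x = 0 := approx_of_mem_C _ _ (h hx)
      _ ≤ approx n₁ c₁ x := approx_nonneg _ _ _
  · calc
      approx n₂ c₂ x ≤ 1 := approx_le_one _ _ _
      _ = approx n₁ c₁ x := (approx_of_nmem_U _ _ hx).symm

theorem approx_mem_Icc_right_left (c : DCU D) (n : ℕ) (x : X) :
    c.approx n x ∈ Icc (c.right.approx n x) (c.left.approx n x) := by
  induction' n with n ihn generalizing c
  · exact ⟨le_rfl, indicator_le_indicator_of_subset (compl_subset_compl.2 c.left_U_subset)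
      (fun _ => zero_le_one) _⟩
  · simp only [approx, mem_Icc]
    refine ⟨midpoint_le_midpoint ?_ (ihn _).1, midpoint_le_midpoint (ihn _).2 ?_⟩ <;>
      apply approx_le_approx_of_U_sub_C
    exacts [c.left_U_subset_right_C, c.left_U_subset_right_C]

theorem approx_le_succ (c : DCU D) (n : ℕ) (x : X) : c.approx n x ≤ c.approx (n + 1) x := by
  induction' n with n ihn generalizing c
  · simp only [approx, right_U, right_le_midpoint]
    exact (approx_mem_Icc_right_left c 0 x).2
  · rw [approx, approx]
    exact midpoint_le_midpoint (ihn _) (ihn _)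

theorem approx_mono (c : DCU D) (x : X) : Monotone fun n => c.approx n x :=
  monotone_nat_of_le_succ fun n => c.approx_le_succ n x

protected noncomputable def lim (c : DCU D) (x : X) : ℝ :=
  ⨆ n, c.approx n x

theorem tendsto_approx_atTop (c : DCU D) (x : X) :
    Tendsto (fun n => c.approx n x) atTop (𝓝 <| c.lim x) :=
  tendsto_atTop_ciSup (c.approx_mono x) ⟨1, fun _ ⟨_, hn⟩ => hn ▸ c.approx_le_one _ _⟩

theorem lim_of_mem_C (c : DCU D) (x : X) (h : x ∈ c.C) : c.lim x = 0 := by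
  simp only [DCU.lim, approx_of_mem_C, h, ciSup_const]

theorem lim_of_nmem_U (c : DCU D) (x : X) (h : x ∉ c.U) : c.lim x = 1 := by
  simp only [DCU.lim, approx_of_nmem_U c _ h, ciSup_const]

theorem lim_eq_midpoint (c : DCU D) (x : X) :
    c.lim x = midpoint ℝ (c.left.lim x) (c.right.lim x) := by
  refine tendsto_nhds_unique (c.tendsto_approx_atTop x) ((tendsto_add_atTop_iff_nat 1).1 ?_)
  simp only [approx]
  exact (c.left.tendsto_approx_atTop x).midpoint (c.right.tendsto_approx_atTop x)

theorem approx_le_lim (c : DCU D) (x : X) (n : ℕ) : c.approx n x ≤ c.lim x :=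
  le_ciSup (c.bddAbove_range_approx x) _

theorem lim_nonneg (c : DCU D) (x : X) : 0 ≤ c.lim x :=
  (c.approx_nonneg 0 x).trans (c.approx_le_lim x 0)

theorem lim_le_one (c : DCU D) (x : X) : c.lim x ≤ 1 :=
  ciSup_le fun _ => c.approx_le_one _ _

theorem lim_mem_Icc (c : DCU D) (x : X) : c.lim x ∈ Icc (0 : ℝ) 1 :=
  ⟨c.lim_nonneg x, c.lim_le_one x⟩

theorem continuous_lim (c : DCU D) : Continuous c.lim := by
  obtain ⟨h0, h1234, h1⟩ : 0 < (2⁻¹ : ℝ) ∧ (2⁻¹ : ℝ) < 3 / 4 ∧ (3 / 4 : ℝ) < 1 := by norm_num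
  refine
    continuous_iff_continuousAt.2 fun x =>
      (Metric.nhds_basis_closedBall_pow (h0.trans h1234) h1).tendsto_right_iff.2 fun n _ => ?_
  simp only [Metric.mem_closedBall]
  induction' n with n ihn generalizing c
  · filter_upwards with y
    rw [pow_zero]
    exact Real.dist_le_of_mem_Icc_01 (c.lim_mem_Icc _) (c.lim_mem_Icc _)
  · by_cases hxl : x ∈ c.left.U
    · filter_upwards [IsOpen.mem_nhds c.left.open_U hxl, ihn c.left] with _ hyl hyd
      rw [pow_succ', c.lim_eq_midpoint, c.lim_eq_midpoint,
        c.right.lim_of_mem_C _ (c.left_U_subset_right_C hyl),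
        c.right.lim_of_mem_C _ (c.left_U_subset_right_C hxl)]
      refine (dist_midpoint_midpoint_le _ _ _ _).trans ?_
      rw [dist_self, add_zero, div_eq_inv_mul]
      gcongr
    · replace hxl : x ∈ c.left.right.Cᶜ :=
        compl_subset_compl.2 c.left.right.subset hxl
      filter_upwards [IsOpen.mem_nhds (isOpen_compl_iff.2 c.left.right.closed_C) hxl,
        ihn c.left.right, ihn c.right] with y hyl hydl hydr
      replace hxl : x ∉ c.left.left.U :=
        compl_subset_compl.2 c.left.left_U_subset_right_C hxl
      replace hyl : y ∉ c.left.left.U :=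
        compl_subset_compl.2 c.left.left_U_subset_right_C hyl
      simp only [pow_succ, c.lim_eq_midpoint, c.left.lim_eq_midpoint,
        c.left.left.lim_of_nmem_U _ hxl, c.left.left.lim_of_nmem_U _ hyl]
      refine (dist_midpoint_midpoint_le _ _ _ _).trans ?_
      refine (div_le_div_of_nonneg_right (add_le_add (dist_midpoint_midpoint_le _ _ _ _) le_rfl)
        zero_le_two).trans ?_
      rw [dist_self, zero_add]
      set r := (3 / 4 : ℝ) ^ n
      calc _ ≤ (r / 2 + r) / 2 := by gcongr
        _ = _ := by field_simp; ring

/-- `lim` is monotone (non-increasing) along the relation `D`. -/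
theorem lim_le_lim_of_rel (c : DCU D) {a b : X} (hab : (a, b) ∈ D) :
    c.lim b ≤ c.lim a := by
  have happrox : ∀ n (c : DCU D), c.approx n b ≤ c.approx n a := by
    intro n
    induction n with
    | zero =>
      intro c
      by_cases ha : a ∈ c.U
      · have hb : b ∈ c.U := c.down_U hab ha
        show indicator c.Uᶜ 1 b ≤ indicator c.Uᶜ 1 a
        rw [indicator_of_notMem (show a ∉ c.Uᶜ from fun h => h ha),
          indicator_of_notMem (show b ∉ c.Uᶜ from fun h => h hb)]
      · calc approx 0 c b ≤ 1 := c.approx_le_one 0 b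
          _ = approx 0 c a := (c.approx_of_nmem_U 0 ha).symm
    | succ n ihn =>
      intro c
      exact midpoint_le_midpoint (ihn c.left) (ihn c.right)
  exact ciSup_mono (c.bddAbove_range_approx a) fun n => happrox n c

end DCU

end Aus

/-- Auslander: a closed quasi-order on a separable, locally compact,
metrizable space is completely determined by its set of Lyapunov functions. -/
theorem stmt_7 {X : Type*} [TopologicalSpace X]
    [TopologicalSpace.SeparableSpace X] [LocallyCompactSpace X]
    [TopologicalSpace.MetrizableSpace X]
    (D : Set (X × X))
    (hrefl : ∀ x : X, (x, x) ∈ D)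
    (htrans : ∀ x y z : X, (x, y) ∈ D → (y, z) ∈ D → (x, z) ∈ D)
    (hclosed : IsClosed D) :
    ∀ x y : X, (x, y) ∈ D ↔
      ∀ L : X → ℝ, Continuous L → (∀ p ∈ D, L p.1 ≥ L p.2) → L x ≥ L y := by
  classical
  intro x y
  constructor
  · intro hxy L _ hL
    exact hL (x, y) hxy
  · intro h
    by_contra hxy
    letI : MetricSpace X := TopologicalSpace.metrizableSpaceMetric X
    haveI : SecondCountableTopology X := UniformSpace.secondCountable_of_separable X
    set c : Aus.DCU D :=
      { C := {z | (x, z) ∈ D}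
        U := {z | (z, y) ∈ D}ᶜ
        closed_C := hclosed.preimage (continuous_const.prodMk continuous_id)
        down_C := fun a b hab ha => htrans _ _ _ ha hab
        open_U := (hclosed.preimage (continuous_id.prodMk continuous_const)).isOpen_compl
        down_U := fun a b hab ha hb => ha (htrans _ _ _ hab hb)
        subset := fun z hz hzy => hxy (htrans _ _ _ hz hzy)
        hP := fun {c u} h1 h2 h3 h4 h5 =>
          Aus.insertion hrefl htrans hclosed h1 h2 h3 h4 h5 } with hc
    have hL := h c.lim c.continuous_lim (fun p hp => c.lim_le_lim_of_rel (by exact hp))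
    have hx : c.lim x = 0 := c.lim_of_mem_C x (hrefl x)
    have hy : c.lim y = 1 := c.lim_of_nmem_U y (fun hy' => hy' (hrefl y))
    rw [hx, hy] at hL
    linarith
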